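/- Equivariance of the moving frame matrix for the projective SL(2) action: let A(x,u_x,u_xx) be the 3×3 matrix with rows [((xu_xx+u_x)/u_x, 2xu_x, −u_xx(xu_xx+2u_x)/(2u_x³)], [u_xx/(2u_x), u_x, −u_xx²/(4u_x³)], [−x(xu_xx+2u_x)/(2u_x), −x²u_x, (xu_xx+2u_x)²/(4u_x³)]. Under the transformation x̃ = (ax+b)/(cx+d), ũ_x̃ = u_x(cx+d)², ũ_x̃x̃ = (cx+d)³(u_xx(cx+d) + 2c u_x) — the prolonged action with ad−bc=1 — one has A(x̃, ũ_x̃, ũ_x̃x̃) = R(a,b,c) A(x,u_x,u_xx), where R(a,b,c) = [[ad+bc, 2bd, −2ac],[cd, d², −c²],[−ab, −b², a²]], d = (1+bc)/a. -/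

import Mathlib

set_option maxHeartbeats 3000000


/-- The moving frame matrix `A(x,u_x,u_xx)` for the projective SL(2) action. -/
noncomputable def Amat (x ux uxx : ℝ) : Matrix (Fin 3) (Fin 3) ℝ :=
  !![(x*uxx + ux)/ux,            2*x*ux,      -(uxx*(x*uxx + 2*ux))/(2*ux^3);
     uxx/(2*ux),                 ux,          -(uxx^2)/(4*ux^3);
     -(x*(x*uxx + 2*ux))/(2*ux), -(x^2)*ux,   (x*uxx + 2*ux)^2/(4*ux^3)]

/-- The adjoint representation `R(a,b,c)` of SL(2), with `d = (1+bc)/a`. -/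
noncomputable def Rmat (a b c : ℝ) : Matrix (Fin 3) (Fin 3) ℝ :=
  !![a*((1 + b*c)/a) + b*c, 2*b*((1 + b*c)/a), -2*a*c;
     c*((1 + b*c)/a),       ((1 + b*c)/a)^2,   -c^2;
     -a*b,                  -b^2,              a^2]

/-- Equivariance of the moving frame matrix under the prolonged projective SL(2) action
`x̃ = (ax+b)/(cx+d)`, `ũ_x̃ = u_x(cx+d)²`, `ũ_x̃x̃ = (cx+d)³(u_xx(cx+d) + 2c u_x)`,
with `d = (1+bc)/a`:  `A(x̃, ũ_x̃, ũ_x̃x̃) = R(a,b,c) A(x,u_x,u_xx)`. -/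
theorem frame_equivariance (a b c x ux uxx : ℝ) (ha : a ≠ 0) (hux : ux ≠ 0)
    (hc : c*x + (1 + b*c)/a ≠ 0) :
    Amat ((a*x + b)/(c*x + (1 + b*c)/a))
        (ux * (c*x + (1 + b*c)/a)^2)
        ((c*x + (1 + b*c)/a)^3 * (uxx * (c*x + (1 + b*c)/a) + 2*c*ux))
      = Rmat a b c * Amat x ux uxx := by
  have key : c*x + (1 + b*c)/a = (a*c*x + 1 + b*c)/a := by field_simp; ring
  have hE : a*c*x + 1 + b*c ≠ 0 := by
    intro h; apply hc; rw [key, h]; simp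
  have hE' : a*x*c + 1 + b*c ≠ 0 := by convert hE using 2; ring
  have hE'' : a*c*x + 1 + c*b ≠ 0 := by convert hE using 2; ring
  rw [key]
  ext i j
  fin_cases i <;> fin_cases j <;>
    · simp [Amat, Rmat, Matrix.mul_apply, Fin.sum_univ_three]
      field_simp
      ring
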